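/- Let A be a complex N×N matrix of finite multiplicative order h ≥ 1, i.e. A^h = 1, let ω = exp(2πi/h), and let t ≥ 0. Then Matrix.exp(t • (A − 1)) = ∑_{r=0}^{h−1} p_r(t) • A^r, where p_r(t) = (e^{−t}/h) · ∑_{s=0}^{h−1} ω^{−s·r} · exp(t·ω^s). -/

import Mathlib

/-- In a complete normed ℂ-algebra, if `x * p = c • p` then `exp x * p = exp c • p`. -/
lemma exp_mul_of_eigen {𝔸 : Type*} [NormedRing 𝔸] [NormedAlgebra ℂ 𝔸] [CompleteSpace 𝔸]
    (x p : 𝔸) (c : ℂ) (hxp : x * p = c • p) :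
    NormedSpace.exp x * p = Complex.exp c • p := by
  have hpow : ∀ n : ℕ, x ^ n * p = c ^ n • p := by
    intro n; induction n with
    | zero => simp
    | succ n ih =>
      rw [pow_succ, mul_assoc, hxp, mul_smul_comm, ih, smul_smul, mul_comm, ← pow_succ]
  have hs : Summable (fun n : ℕ => ((n.factorial : ℂ))⁻¹ • x ^ n) :=
    NormedSpace.expSeries_summable' x
  have hsc : Summable (fun n : ℕ => ((n.factorial : ℂ))⁻¹ • c ^ n) :=
    NormedSpace.expSeries_summable' c
  rw [NormedSpace.exp_eq_tsum (𝕂 := ℂ), ← hs.tsum_mul_right]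
  have : ∀ n : ℕ, (((n.factorial : ℂ))⁻¹ • x ^ n) * p
      = (((n.factorial : ℂ))⁻¹ • c ^ n) • p := by
    intro n
    rw [smul_mul_assoc, hpow, smul_smul, smul_eq_mul, mul_smul]
  rw [tsum_congr this, hsc.tsum_smul_const, Complex.exp_eq_exp_ℂ, NormedSpace.exp_eq_tsum (𝕂 := ℂ)]



/-- For a matrix `A` of finite multiplicative order `h` (`A^h = 1`) and `t ≥ 0`,
`exp(t • (A − 1)) = ∑_{r<h} p_r(t) • A^r` with
`p_r(t) = (e^{−t}/h) ∑_{s<h} ω^{−s·r} exp(t·ω^s)`, `ω = exp(2πi/h)`. -/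
theorem exp_lindblad_of_finite_order
    {N : ℕ} (A : Matrix (Fin N) (Fin N) ℂ) (h : ℕ) (hh : 1 ≤ h) (hA : A ^ h = 1)
    (t : ℝ) (ht : 0 ≤ t) :
    NormedSpace.exp (t • (A - 1)) =
      ∑ r ∈ Finset.range h,
        ((Complex.exp (-(t : ℂ)) / (h : ℂ)) *
          ∑ s ∈ Finset.range h,
            Complex.exp (2 * Real.pi * Complex.I / (h : ℂ)) ^ (-((s : ℤ) * (r : ℤ))) *
              Complex.exp ((t : ℂ) * Complex.exp (2 * Real.pi * Complex.I / (h : ℂ)) ^ (s : ℕ)))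
          • A ^ r := by
  letI : SeminormedRing (Matrix (Fin N) (Fin N) ℂ) := Matrix.linftyOpSemiNormedRing
  letI : NormedRing (Matrix (Fin N) (Fin N) ℂ) := Matrix.linftyOpNormedRing
  letI : NormedAlgebra ℂ (Matrix (Fin N) (Fin N) ℂ) := Matrix.linftyOpNormedAlgebra
  set ω : ℂ := Complex.exp (2 * Real.pi * Complex.I / (h : ℂ)) with hωdef
  have hh0 : (h : ℂ) ≠ 0 := Nat.cast_ne_zero.mpr (by omega)
  have hω : IsPrimitiveRoot ω h := Complex.isPrimitiveRoot_exp h (by omega)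
  have hω1 : ω ^ h = 1 := hω.pow_eq_one
  have hωne : ω ≠ 0 := Complex.exp_ne_zero _
  -- projectors
  set P : ℕ → Matrix (Fin N) (Fin N) ℂ :=
    fun s => (h : ℂ)⁻¹ • ∑ r ∈ Finset.range h, ω ^ (-((s : ℤ) * (r : ℤ))) • A ^ r with hPdef
  -- eigenvector property
  have heigen : ∀ s : ℕ, A * P s = ω ^ s • P s := by
    intro s
    rw [hPdef]
    simp only [mul_smul_comm, Finset.mul_sum]
    rw [smul_comm]
    congr 1
    set F : ℕ → Matrix (Fin N) (Fin N) ℂ := fun r => ω ^ (-((s : ℤ) * (r : ℤ))) • A ^ r with hF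
    have hF0 : F 0 = 1 := by simp [hF]
    have hFh : F h = 1 := by
      have : ω ^ (-((s : ℤ) * (h : ℤ))) = 1 := by
        rw [show -((s : ℤ) * (h : ℤ)) = (h : ℤ) * (-(s:ℤ)) by ring, zpow_mul, zpow_natCast, hω1,
          one_zpow]
      show ω ^ (-((s : ℤ) * (h : ℤ))) • A ^ h = 1
      rw [this, hA, one_smul]
    have hstep : ∀ r : ℕ, ω ^ (-((s : ℤ) * (r : ℤ))) • (A * A ^ r) = ω ^ s • F (r + 1) := by
      intro r
      rw [hF]
      simp only [smul_smul]
      congr 1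
      · rw [← zpow_natCast ω s, ← zpow_add₀ hωne]
        congr 1
        push_cast
        ring
      · rw [← pow_succ']
    calc ∑ r ∈ Finset.range h, ω ^ (-((s : ℤ) * (r : ℤ))) • (A * A ^ r)
        = ∑ r ∈ Finset.range h, ω ^ s • F (r + 1) := by
          exact Finset.sum_congr rfl fun r _ => hstep r
      _ = ω ^ s • ∑ r ∈ Finset.range h, F (r + 1) := by rw [Finset.smul_sum]
      _ = ω ^ s • ∑ r ∈ Finset.range h, F r := by
          congr 1
          have h1 : ∑ r ∈ Finset.range (h + 1), F r
              = (∑ r ∈ Finset.range h, F (r + 1)) + F 0 := Finset.sum_range_succ' F h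
          have h2 : ∑ r ∈ Finset.range (h + 1), F r
              = (∑ r ∈ Finset.range h, F r) + F h := Finset.sum_range_succ F h
          rw [hF0, hFh] at *
          linear_combination (norm := module) h2 - h1
  -- resolution of identity
  have hsumP : ∑ s ∈ Finset.range h, P s = 1 := by
    rw [hPdef]
    simp only [← Finset.smul_sum]
    rw [Finset.sum_comm]
    have : ∀ r ∈ Finset.range h,
        ∑ s ∈ Finset.range h, ω ^ (-((s : ℤ) * (r : ℤ))) • A ^ r
          = (if r = 0 then (h : ℂ) else 0) • A ^ r := by
      intro r hr
      rw [← Finset.sum_smul]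
      congr 1
      have hrw : ∀ s : ℕ, ω ^ (-((s : ℤ) * (r : ℤ))) = (ω ^ (-(r:ℤ))) ^ s := by
        intro s
        rw [← zpow_natCast (ω ^ (-(r:ℤ))) s, ← zpow_mul]
        congr 1
        ring
      simp only [hrw]
      rcases eq_or_ne r 0 with hr0 | hr0
      · simp [hr0]
      · rw [if_neg hr0]
        have hζ1 : (ω ^ (-(r:ℤ))) ≠ 1 := by
          rw [zpow_neg, zpow_natCast, ne_eq, inv_eq_one]
          exact hω.pow_ne_one_of_pos_of_lt (by omega) (Finset.mem_range.mp hr)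
        rw [geom_sum_eq hζ1]
        have : (ω ^ (-(r:ℤ))) ^ h = 1 := by
          rw [← zpow_natCast (ω ^ (-(r:ℤ))) h, ← zpow_mul,
            show (-(r:ℤ)) * (h:ℤ) = (h:ℤ) * (-(r:ℤ)) by ring, zpow_mul, zpow_natCast, hω1,
            one_zpow]
        rw [this]
        simp
    rw [Finset.sum_congr rfl this, Finset.sum_eq_single 0 (by intro r _ hr0; simp [hr0])
      (by intro habs; exact absurd (Finset.mem_range.mpr (by omega)) habs)]
    simp [hh0]
  -- exp(tA) decomposition
  have hexpA : NormedSpace.exp ((t : ℂ) • A)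
      = ∑ s ∈ Finset.range h, Complex.exp ((t : ℂ) * ω ^ s) • P s := by
    calc NormedSpace.exp ((t : ℂ) • A)
        = NormedSpace.exp ((t : ℂ) • A) * ∑ s ∈ Finset.range h, P s := by rw [hsumP, mul_one]
      _ = ∑ s ∈ Finset.range h, NormedSpace.exp ((t : ℂ) • A) * P s := by
          rw [Finset.mul_sum]
      _ = ∑ s ∈ Finset.range h, Complex.exp ((t : ℂ) * ω ^ s) • P s := by
          refine Finset.sum_congr rfl fun s _ => ?_
          refine exp_mul_of_eigen _ _ _ ?_
          rw [smul_mul_assoc, heigen, smul_smul]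
  -- splitting off the scalar part
  have hsplit : NormedSpace.exp (t • (A - 1))
      = Complex.exp (-(t : ℂ)) • NormedSpace.exp ((t : ℂ) • A) := by
    have harg : t • (A - 1) = (-(t:ℂ)) • (1 : Matrix (Fin N) (Fin N) ℂ) + (t : ℂ) • A := by
      ext i j
      simp [Matrix.smul_apply, Matrix.sub_apply, Matrix.add_apply, Matrix.one_apply,
        Complex.real_smul]
      split_ifs <;> ring
    rw [harg, Matrix.exp_add_of_commute _ _ (Commute.smul_left (Commute.smul_right
      (Commute.one_left A) _) _)]
    congr 1
    have : (-(t:ℂ)) • (1 : Matrix (Fin N) (Fin N) ℂ)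
        = algebraMap ℂ (Matrix (Fin N) (Fin N) ℂ) (-(t:ℂ)) := (Algebra.algebraMap_eq_smul_one _).symm
    rw [this]
    erw [← NormedSpace.algebraMap_exp_comm, ← Complex.exp_eq_exp_ℂ,
      Algebra.algebraMap_eq_smul_one, smul_mul_assoc, one_mul]
  rw [hsplit, hexpA, hPdef]
  simp only [Finset.smul_sum, smul_smul, Finset.sum_smul]
  rw [Finset.sum_comm]
  refine Finset.sum_congr rfl fun r _ => ?_
  rw [Finset.mul_sum, Finset.sum_smul]
  refine Finset.sum_congr rfl fun s _ => ?_
  congr 1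
  field_simp
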